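/- For every integer n ≥ 2 and all real x, the n-th derivative of the swish function swish(x) = x/(1+e^{−x}) satisfies |swish^{(n)}(x)| < n!. -/

import Mathlib

open Real

/-- The swish activation function. -/
noncomputable def swish (x : ℝ) : ℝ := x / (1 + Real.exp (-x))

open Metric in
private lemma cauchy_est {f : ℂ → ℂ} {c : ℂ} {R : NNReal} {M : ℝ} (hR : 0 < R)
    (hf : DifferentiableOn ℂ f (closedBall (c:ℂ) (R:ℝ)))
    (hM : ∀ z ∈ closedBall (c:ℂ) (R:ℝ), ‖f z‖ ≤ M) (n : ℕ) :
    ‖iteratedDeriv n f c‖ ≤ n.factorial * M / (R:ℝ)^n := by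
  have hR' : (0:ℝ) < R := hR
  have hp := hf.hasFPowerSeriesOnBall hR
  have h1 : iteratedDeriv n f c = (n.factorial : ℂ) * ((cauchyPowerSeries f c R n) fun _ => (1:ℂ)) := by
    rw [iteratedDeriv_eq_iteratedFDeriv, ← hp.factorial_smul 1 n, nsmul_eq_mul]
  have h2 : ‖(cauchyPowerSeries f c R n) fun _ => (1:ℂ)‖ ≤ ‖cauchyPowerSeries f c (R:ℝ) n‖ := by
    simpa using (cauchyPowerSeries f c (R:ℝ) n).le_opNorm (fun _ => (1:ℂ))
  have hcont : Continuous fun θ : ℝ => f (circleMap c R θ) := by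
    rw [← continuousOn_univ]
    exact hf.continuousOn.comp (continuous_circleMap c R).continuousOn
      fun θ _ => sphere_subset_closedBall (circleMap_mem_sphere c hR'.le θ)
  have hint : (∫ θ in (0:ℝ)..2*π, ‖f (circleMap c R θ)‖) ≤ 2*π*M := by
    calc (∫ θ in (0:ℝ)..2*π, ‖f (circleMap c R θ)‖)
        ≤ ∫ _ in (0:ℝ)..2*π, M := by
          refine intervalIntegral.integral_mono_on (by positivity)
            (hcont.norm.intervalIntegrable _ _) intervalIntegrable_const fun θ _ => ?_
          exact hM _ (sphere_subset_closedBall (circleMap_mem_sphere c hR'.le θ))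
      _ = 2*π*M := by simp
  have h3 : ‖cauchyPowerSeries f c (R:ℝ) n‖ ≤ M / (R:ℝ)^n := by
    refine (norm_cauchyPowerSeries_le f c R n).trans ?_
    rw [_root_.abs_of_nonneg hR'.le, inv_pow, ← div_eq_mul_inv]
    apply div_le_div_of_nonneg_right ?_ (by positivity)
    calc (2*π)⁻¹ * ∫ θ in (0:ℝ)..2*π, ‖f (circleMap c R θ)‖
        ≤ (2*π)⁻¹ * (2*π*M) := by
          apply mul_le_mul_of_nonneg_left hint (by positivity)
      _ = M := by field_simp
  calc ‖iteratedDeriv n f c‖ = n.factorial * ‖(cauchyPowerSeries f c (R:ℝ) n) fun _ => (1:ℂ)‖ := by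
        rw [h1, norm_mul]; simp
    _ ≤ n.factorial * (M / (R:ℝ)^n) := by
        apply mul_le_mul_of_nonneg_left (h2.trans h3) (by positivity)
    _ = n.factorial * M / (R:ℝ)^n := by ring

/-- complexification of swish -/
noncomputable def Wc (z : ℂ) : ℂ := z / (1 + Complex.exp (-z))

private def Sstrip : Set ℂ := {z : ℂ | |z.im| < 1.55}

private lemma Sstrip_open : IsOpen Sstrip := by
  have : Sstrip = Complex.im ⁻¹' (Set.Ioo (-1.55) 1.55) := by
    ext z; simp [Sstrip, abs_lt, and_comm]
  rw [this]
  exact isOpen_Ioo.preimage Complex.continuous_im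

private lemma cos_pos_of_im {t : ℝ} (ht : |t| ≤ 1.55) : 0 < Real.cos t := by
  apply Real.cos_pos_of_mem_Ioo
  have hpi : (3.141592 : ℝ) < π := Real.pi_gt_d6
  rw [abs_le] at ht
  constructor <;> [linarith [ht.1]; linarith [ht.2]]

private lemma denom_re {z : ℂ} (hz : |z.im| ≤ 1.55) :
    (1:ℝ) ≤ (1 + Complex.exp (-z)).re ∧ (1:ℝ) ≤ (1 + Complex.exp z).re := by
  have hc : 0 < Real.cos z.im := cos_pos_of_im hz
  have h1 : (Complex.exp (-z)).re = Real.exp (-z.re) * Real.cos z.im := by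
    rw [Complex.exp_re]; simp
  have h2 : (Complex.exp z).re = Real.exp z.re * Real.cos z.im := by
    rw [Complex.exp_re]
  constructor <;> simp only [Complex.add_re, Complex.one_re, h1, h2] <;>
    nlinarith [Real.exp_pos (-z.re), Real.exp_pos z.re]

private lemma denom_ne {z : ℂ} (hz : |z.im| ≤ 1.55) : 1 + Complex.exp (-z) ≠ 0 := by
  intro h0
  have := (denom_re hz).1
  rw [h0] at this
  simp at this
  linarith

private lemma denom_ne' {z : ℂ} (hz : |z.im| ≤ 1.55) : 1 + Complex.exp z ≠ 0 := by
  intro h0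
  have := (denom_re hz).2
  rw [h0] at this
  simp at this
  linarith

private lemma Wc_diffOn : DifferentiableOn ℂ Wc Sstrip := by
  apply DifferentiableOn.div differentiableOn_id
  · exact (Differentiable.const_add 1 (Complex.differentiable_exp.comp differentiable_neg)).differentiableOn
  · exact fun z hz => denom_ne (le_of_lt hz)

private lemma Wc_iter_analytic (n : ℕ) : AnalyticOnNhd ℂ (iteratedDeriv n Wc) Sstrip := by
  induction n with
  | zero => simpa [iteratedDeriv_zero] using Wc_diffOn.analyticOnNhd Sstrip_open
  | succ n ih => rw [iteratedDeriv_succ]; exact ih.deriv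

private lemma ofReal_mem_Sstrip (x : ℝ) : (x : ℂ) ∈ Sstrip := by
  simp [Sstrip]; norm_num

private lemma transfer (n : ℕ) : ∀ x : ℝ, iteratedDeriv n swish x = (iteratedDeriv n Wc x).re := by
  induction n with
  | zero =>
    intro x
    simp only [iteratedDeriv_zero]
    have : Wc (x : ℂ) = ((swish x : ℝ) : ℂ) := by
      simp only [Wc, swish]
      push_cast [Complex.ofReal_exp]
      ring_nf
    rw [this, Complex.ofReal_re]
  | succ n ih =>
    intro x
    have hd : HasDerivAt (iteratedDeriv n Wc) (deriv (iteratedDeriv n Wc) (x:ℂ)) (x:ℂ) :=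
      ((Wc_iter_analytic n (x:ℂ) (ofReal_mem_Sstrip x)).differentiableAt).hasDerivAt
    rw [iteratedDeriv_succ, iteratedDeriv_succ]
    have hfun : iteratedDeriv n swish = fun t : ℝ => (iteratedDeriv n Wc t).re := funext ih
    rw [hfun, hd.real_of_complex.deriv]

open Metric in
private lemma ball_bound {x : ℝ} (hx : x ≤ 0) {z : ℂ}
    (hz : z ∈ closedBall (x:ℂ) (3/2 : ℝ)) : ‖Wc z‖ ≤ 3 := by
  have hdist : ‖z - (x:ℂ)‖ ≤ 3/2 := by
    rw [mem_closedBall, dist_eq_norm] at hz; exact hz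
  have him : |z.im| ≤ 3/2 := by
    have := Complex.abs_im_le_norm (z - (x:ℂ))
    simp only [Complex.sub_im, Complex.ofReal_im, sub_zero] at this
    exact this.trans hdist
  have him' : |z.im| ≤ 1.55 := him.trans (by norm_num)
  have hre : z.re ≤ x + 3/2 := by
    have := Complex.abs_re_le_norm (z - (x:ℂ))
    simp only [Complex.sub_re, Complex.ofReal_re] at this
    have := (abs_le.mp (this.trans hdist)).2
    linarith
  have hnz : ‖z‖ ≤ 3/2 - x := by
    calc ‖z‖ = ‖(z - (x:ℂ)) + (x:ℂ)‖ := by ring_nf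
      _ ≤ ‖z - (x:ℂ)‖ + ‖(x:ℂ)‖ := norm_add_le _ _
      _ ≤ 3/2 + |x| := by
          refine add_le_add hdist ?_
          rw [Complex.norm_real, Real.norm_eq_abs]
      _ = 3/2 - x := by rw [abs_of_nonpos hx]; ring
  have hd1 : (1:ℝ) ≤ ‖1 + Complex.exp (-z)‖ :=
    le_trans (denom_re him').1 (Complex.re_le_norm _)
  have hd2 : (1:ℝ) ≤ ‖1 + Complex.exp z‖ :=
    le_trans (denom_re him').2 (Complex.re_le_norm _)
  by_cases hx2 : -3/2 ≤ x
  · have : ‖Wc z‖ ≤ ‖z‖ := by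
      rw [Wc, norm_div]
      exact div_le_self (norm_nonneg _) hd1
    linarith
  · push_neg at hx2
    have hwc : Wc z = z * Complex.exp z / (1 + Complex.exp z) := by
      rw [Wc, div_eq_div_iff (denom_ne him') (denom_ne' him')]
      have hee : Complex.exp z * Complex.exp (-z) = 1 := by
        rw [← Complex.exp_add]; simp
      linear_combination (-z) * hee
    have h1 : ‖Wc z‖ ≤ ‖z‖ * Real.exp z.re := by
      rw [hwc, norm_div, norm_mul, Complex.norm_exp]
      exact (div_le_self (by positivity) hd2)
    have h2 : ‖z‖ * Real.exp z.re ≤ (3/2 - x) * Real.exp (x + 3/2) := by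
      apply mul_le_mul hnz (Real.exp_le_exp.mpr hre) (Real.exp_pos _).le (by linarith)
    have h3 : (3/2 - x) * Real.exp (x + 3/2) ≤ 3 := by
      set t := x + 3/2 with ht
      have htle : t ≤ 0 := by simp [ht]; linarith
      have he1 : -t + 1 ≤ Real.exp (-t) := Real.add_one_le_exp (-t)
      have he2 : Real.exp t * Real.exp (-t) = 1 := by rw [← Real.exp_add]; simp
      have hp1 : 0 < Real.exp t := Real.exp_pos t
      have hp2 : 0 < Real.exp (-t) := Real.exp_pos (-t)
      have : 3/2 - x = 3 - t := by rw [ht]; ring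
      rw [this]
      nlinarith [mul_le_mul_of_nonneg_left he1 hp1.le]
    linarith

open Metric in
private lemma neg_side {n : ℕ} (hn : 3 ≤ n) {x : ℝ} (hx : x ≤ 0) :
    |iteratedDeriv n swish x| < n.factorial := by
  have hRcast : (((3/2 : NNReal)) : ℝ) = 3/2 := by norm_num
  have hsub : closedBall ((x:ℂ)) (3/2:ℝ) ⊆ Sstrip := by
    intro z hz
    have hdist : ‖z - (x:ℂ)‖ ≤ 3/2 := by rw [mem_closedBall, dist_eq_norm] at hz; exact hz
    have h := Complex.abs_im_le_norm (z - (x:ℂ))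
    simp only [Complex.sub_im, Complex.ofReal_im, sub_zero] at h
    have him : |z.im| ≤ 3/2 := h.trans hdist
    simp only [Sstrip, Set.mem_setOf_eq]
    calc |z.im| ≤ 3/2 := him
      _ < 1.55 := by norm_num
  have hdiff : DifferentiableOn ℂ Wc (closedBall ((x:ℂ)) (((3/2:NNReal)):ℝ)) := by
    rw [hRcast]; exact Wc_diffOn.mono hsub
  have hM : ∀ z ∈ closedBall ((x:ℂ)) (((3/2:NNReal)):ℝ), ‖Wc z‖ ≤ 3 := by
    rw [hRcast]; exact fun z hz => ball_bound hx hz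
  have hc := cauchy_est (by norm_num : 0 < (3/2:NNReal)) hdiff hM n
  rw [hRcast] at hc
  rw [transfer n x]
  have habs : |(iteratedDeriv n Wc x).re| ≤ ‖iteratedDeriv n Wc (x:ℂ)‖ := by
    exact Complex.abs_re_le_norm _
  have h32 : (3:ℝ) < (3/2:ℝ)^n := by
    calc (3:ℝ) < (3/2:ℝ)^3 := by norm_num
      _ ≤ (3/2:ℝ)^n := pow_le_pow_right₀ (by norm_num) hn
  have hfac : (0:ℝ) < n.factorial := by exact_mod_cast n.factorial_pos
  have hlast : (n.factorial : ℝ) * 3 / (3/2:ℝ)^n < n.factorial := by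
    rw [div_lt_iff₀ (by positivity)]
    nlinarith
  calc |(iteratedDeriv n Wc (x:ℂ)).re| ≤ ‖iteratedDeriv n Wc (x:ℂ)‖ := habs
    _ ≤ (n.factorial : ℝ) * 3 / (3/2:ℝ)^n := hc
    _ < n.factorial := hlast

private lemma hpos (t : ℝ) : (0:ℝ) < 1 + Real.exp (-t) := by positivity

private lemma swish_smooth : ContDiff ℝ (⊤:ℕ∞) swish := by
  have : swish = fun t : ℝ => t / (1 + Real.exp (-t)) := rfl
  rw [this]
  exact contDiff_id.div
    (contDiff_const.add (Real.contDiff_exp.comp contDiff_neg))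
    (fun t => (hpos t).ne')

private lemma iter_const (m : ℕ) : ∀ c : ℝ, iteratedDeriv (m+1) (fun _ : ℝ => c) = fun _ => 0 := by
  induction m with
  | zero => intro c; funext x; rw [iteratedDeriv_one]; simp
  | succ m ih => intro c; rw [iteratedDeriv_succ', deriv_const']; exact ih 0

private lemma iter_id {n : ℕ} (hn : 2 ≤ n) : iteratedDeriv n (fun t : ℝ => t) = fun _ => 0 := by
  obtain ⟨m, rfl⟩ : ∃ m, n = (m + 1) + 1 := ⟨n - 2, by omega⟩
  rw [iteratedDeriv_succ']
  have : deriv (fun t : ℝ => t) = fun _ : ℝ => (1:ℝ) := by funext t; simp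
  rw [this, iter_const _ 1]

private lemma swish_add (t : ℝ) : swish t = t + swish (-t) := by
  have h1 : (0:ℝ) < 1 + Real.exp (-t) := hpos t
  have h2 : (0:ℝ) < 1 + Real.exp t := by positivity
  have h3 : Real.exp (-t) * Real.exp t = 1 := by rw [← Real.exp_add]; simp
  rw [swish, swish, neg_neg]
  field_simp
  linear_combination (-t) * h3

private lemma symmetry {n : ℕ} (hn : 2 ≤ n) (x : ℝ) :
    |iteratedDeriv n swish x| = |iteratedDeriv n swish (-x)| := by
  have hfun : swish = (fun t : ℝ => t) + (fun t : ℝ => swish (-t)) := by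
    funext t; exact swish_add t
  have hc1 : ContDiffOn ℝ n (fun t : ℝ => t) Set.univ := contDiffOn_id
  have hc2 : ContDiffOn ℝ n (fun t : ℝ => swish (-t)) Set.univ :=
    (((swish_smooth.of_le (mod_cast le_top)).comp contDiff_neg).contDiffOn)
  have key : iteratedDeriv n swish x
      = iteratedDeriv n (fun t : ℝ => t) x + iteratedDeriv n (fun t : ℝ => swish (-t)) x := by
    conv_lhs => rw [hfun]
    rw [← iteratedDerivWithin_univ, ← iteratedDerivWithin_univ, ← iteratedDerivWithin_univ]
    exact iteratedDerivWithin_add (Set.mem_univ x) uniqueDiffOn_univ (hc1 x (Set.mem_univ x)) (hc2 x (Set.mem_univ x))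
  rw [key, iter_id hn, iteratedDeriv_comp_neg]
  simp [abs_mul]

private lemma hexp (t : ℝ) : HasDerivAt (fun s : ℝ => Real.exp (-s)) (-Real.exp (-t)) t := by
  simpa [Function.comp_def] using (Real.hasDerivAt_exp (-t)).comp t (hasDerivAt_neg t)

private lemma hden (t : ℝ) : HasDerivAt (fun s : ℝ => 1 + Real.exp (-s)) (-Real.exp (-t)) t :=
  (hexp t).const_add 1

private lemma hsig (t : ℝ) :
    HasDerivAt (fun s : ℝ => (1 + Real.exp (-s))⁻¹) (Real.exp (-t) / (1 + Real.exp (-t))^2) t := by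
  have h := (hden t).inv (hpos t).ne'
  refine h.congr_deriv ?_
  field_simp

private lemma hsig' (t : ℝ) :
    HasDerivAt (fun s : ℝ => Real.exp (-s) / (1 + Real.exp (-s))^2)
      (Real.exp (-t) * (Real.exp (-t) - 1) / (1 + Real.exp (-t))^3) t := by
  have hv : HasDerivAt (fun s : ℝ => (1 + Real.exp (-s))^2)
      ((2:ℕ) * (1 + Real.exp (-t))^1 * (-Real.exp (-t))) t := (hden t).pow 2
  have h := (hexp t).div hv (by positivity)
  refine h.congr_deriv ?_
  have h0 : (0:ℝ) < 1 + Real.exp (-t) := hpos t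
  field_simp
  ring

private lemma hswish' (t : ℝ) :
    HasDerivAt swish ((1 + Real.exp (-t))⁻¹ + t * (Real.exp (-t) / (1 + Real.exp (-t))^2)) t := by
  have h := (hasDerivAt_id t).mul (hsig t)
  have hfun : swish = fun s : ℝ => s * (1 + Real.exp (-s))⁻¹ := by
    funext s; rw [swish, div_eq_mul_inv]
  rw [hfun]
  exact h.congr_deriv (by simp)

private lemma swish_second (x : ℝ) : iteratedDeriv 2 swish x =
    2 * (Real.exp (-x) / (1 + Real.exp (-x))^2)
      + x * (Real.exp (-x) * (Real.exp (-x) - 1) / (1 + Real.exp (-x))^3) := by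
  have hd1 : deriv swish = fun t => (1 + Real.exp (-t))⁻¹ + t * (Real.exp (-t) / (1 + Real.exp (-t))^2) :=
    funext fun t => (hswish' t).deriv
  have h2 : HasDerivAt (fun t : ℝ => (1 + Real.exp (-t))⁻¹ + t * (Real.exp (-t) / (1 + Real.exp (-t))^2))
      (2 * (Real.exp (-x) / (1 + Real.exp (-x))^2)
        + x * (Real.exp (-x) * (Real.exp (-x) - 1) / (1 + Real.exp (-x))^3)) x := by
    have hb := (hasDerivAt_id x).mul (hsig' x)
    have h := (hsig x).add hb
    refine h.congr_deriv ?_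
    simp only [id_eq]
    ring
  rw [show (2:ℕ) = 1 + 1 from rfl, iteratedDeriv_succ, iteratedDeriv_one, hd1, h2.deriv]

private lemma bound2 (x : ℝ) : |iteratedDeriv 2 swish x| < 2 := by
  rw [swish_second]
  set E := Real.exp (-x) with hEdef
  have hE : 0 < E := Real.exp_pos _
  have h1 : x * E ≤ 1 - E := by
    have h := Real.add_one_le_exp x
    have hinv : Real.exp x = E⁻¹ := by rw [hEdef, Real.exp_neg, inv_inv]
    rw [hinv] at h
    have := mul_le_mul_of_nonneg_right h hE.le
    rw [inv_mul_cancel₀ hE.ne'] at this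
    nlinarith
  have h2 : -x ≤ E - 1 := by
    have h := Real.add_one_le_exp (-x)
    linarith
  have hD : (0:ℝ) < 1 + E := by linarith
  have key : 2 * (E / (1 + E)^2) + x * (E * (E - 1) / (1 + E)^3)
      = (2 * E * (1 + E) + x * E * (E - 1)) / (1 + E)^3 := by
    field_simp
  rw [key, abs_div, abs_of_pos (by positivity : (0:ℝ) < (1+E)^3), div_lt_iff₀ (by positivity)]
  have hx1 : x * E * E ≤ (1 - E) * E := mul_le_mul_of_nonneg_right h1 hE.le
  have hx2 : -x * E ≤ (E - 1) * E := mul_le_mul_of_nonneg_right h2 hE.le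
  rw [abs_lt]
  constructor <;> nlinarith [sq_nonneg E, sq_nonneg (1+E), mul_pos hE hD]

/-- For every `n ≥ 2` and all real `x`, `|swish^{(n)}(x)| < n!`. -/
theorem abs_iteratedDeriv_swish_lt (n : ℕ) (hn : 2 ≤ n) (x : ℝ) :
    |iteratedDeriv n swish x| < (n.factorial : ℝ) := by
  rcases eq_or_lt_of_le hn with heq | hgt
  · subst heq
    have := bound2 x
    norm_num [Nat.factorial]
    convert this using 2
  · have hn3 : 3 ≤ n := hgt
    rcases le_total x 0 with hx | hx
    · exact neg_side hn3 hx
    · rw [symmetry hn x]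
      exact neg_side hn3 (by linarith : -x ≤ 0)
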